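/- Fix t ∈ {0,1} and m ∈ 𝕄. Assume: (positivity) P(T=t, M=m, Z_TY=v, Z_MY=s) > 0 for all v ∈ V, s ∈ S with P(Z_TY=v, Z_MY=s) > 0; and (conditional ignorability of the outcome) for all v, s with P(Z_TY=v, Z_MY=s) > 0, E[Y(t,m)·1{T=t, M=m} | Z_TY=v, Z_MY=s] = E[Y(t,m) | Z_TY=v, Z_MY=s] · P(T=t, M=m | Z_TY=v, Z_MY=s). Then for every s with P(Z_MY=s) > 0: E[Y(t,m) | Z_MY=s] = ∑_{v : P(Z_TY=v, Z_MY=s)>0} E[Y | T=t, M=m, Z_TY=v, Z_MY=s] · P(Z_TY=v | Z_MY=s). (Back-door adjustment of the {T,M}→Y relationship by Z_TY.) -/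

import Mathlib

open Finset
open scoped Classical

/-- Probability of an event `A` under the finite distribution `p`. -/
noncomputable def Pr {Ω : Type*} [Fintype Ω] (p : Ω → ℝ) (A : Ω → Prop) : ℝ :=
  ∑ ω, if A ω then p ω else 0

/-- Expectation of a random variable `V` under the finite distribution `p`. -/
noncomputable def Ex {Ω : Type*} [Fintype Ω] (p : Ω → ℝ) (V : Ω → ℝ) : ℝ :=
  ∑ ω, p ω * V ω

/-- Conditional probability `P(A | B) = P(A ∩ B) / P(B)`. -/
noncomputable def PrCond {Ω : Type*} [Fintype Ω] (p : Ω → ℝ) (A B : Ω → Prop) : ℝ :=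
  Pr p (fun ω => A ω ∧ B ω) / Pr p B

/-- Conditional expectation `E[V | B] = E[V·1_B] / P(B)`. -/
noncomputable def ExCond {Ω : Type*} [Fintype Ω] (p : Ω → ℝ) (V : Ω → ℝ) (B : Ω → Prop) : ℝ :=
  Ex p (fun ω => V ω * (if B ω then 1 else 0)) / Pr p B

lemma Pr_nonneg' {Ω : Type*} [Fintype Ω] (p : Ω → ℝ) (hp : ∀ ω, 0 ≤ p ω) (A : Ω → Prop) :
    0 ≤ Pr p A := by
  apply Finset.sum_nonneg
  intro ω _
  split <;> simp [hp ω]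

lemma p_zero_of_Pr_zero {Ω : Type*} [Fintype Ω] (p : Ω → ℝ) (hp : ∀ ω, 0 ≤ p ω)
    (A : Ω → Prop) (h : Pr p A = 0) : ∀ ω, A ω → p ω = 0 := by
  intro ω hA
  have := (Finset.sum_eq_zero_iff_of_nonneg (by
    intro ω _; split <;> simp [hp ω])).mp h ω (Finset.mem_univ ω)
  simpa [hA] using this

lemma Ex_ind_zero {Ω : Type*} [Fintype Ω] (p : Ω → ℝ) (hp : ∀ ω, 0 ≤ p ω)
    (A : Ω → Prop) (h : Pr p A = 0) (f : Ω → ℝ) :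
    Ex p (fun ω => f ω * (if A ω then 1 else 0)) = 0 := by
  apply Finset.sum_eq_zero
  intro ω _
  by_cases hA : A ω
  · simp [p_zero_of_Pr_zero p hp A h ω hA]
  · simp [hA]

local notation "I[" A "]" => @ite ℝ A (Classical.propDecidable A) (1:ℝ) (0:ℝ)

/-- back-door adjustment of the `{T,M} → Y` relationship by `Z_TY`,
conditioning on `Z_MY`. Here the observed outcome is `Y (T ω) (M (T ω) ω) ω`. -/
theorem stmt5 {Ω 𝕄 U V S : Type*} [Fintype Ω] [Fintype 𝕄] [Fintype U] [Fintype V] [Fintype S]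
    (p : Ω → ℝ) (hp : ∀ ω, 0 ≤ p ω) (hp1 : ∑ ω, p ω = 1)
    (T : Ω → Fin 2) (M : Fin 2 → Ω → 𝕄) (Y : Fin 2 → 𝕄 → Ω → ℝ)
    (ZTM : Ω → U) (ZTY : Ω → V) (ZMY : Ω → S) (t : Fin 2) (m : 𝕄)
    (hpos : ∀ (v : V) (s : S), 0 < Pr p (fun ω => ZTY ω = v ∧ ZMY ω = s) →
      0 < Pr p (fun ω => T ω = t ∧ M (T ω) ω = m ∧ ZTY ω = v ∧ ZMY ω = s))
    (hign : ∀ (v : V) (s : S), 0 < Pr p (fun ω => ZTY ω = v ∧ ZMY ω = s) →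
      ExCond p (fun ω => Y t m ω * (if T ω = t ∧ M (T ω) ω = m then 1 else 0))
          (fun ω => ZTY ω = v ∧ ZMY ω = s) =
        ExCond p (fun ω => Y t m ω) (fun ω => ZTY ω = v ∧ ZMY ω = s) *
          PrCond p (fun ω => T ω = t ∧ M (T ω) ω = m)
            (fun ω => ZTY ω = v ∧ ZMY ω = s)) :
    ∀ s : S, 0 < Pr p (fun ω => ZMY ω = s) →
      ExCond p (fun ω => Y t m ω) (fun ω => ZMY ω = s) =
        ∑ v ∈ Finset.univ.filter
            (fun v : V => 0 < Pr p (fun ω => ZTY ω = v ∧ ZMY ω = s)),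
          ExCond p (fun ω => Y (T ω) (M (T ω) ω) ω)
              (fun ω => T ω = t ∧ M (T ω) ω = m ∧ ZTY ω = v ∧ ZMY ω = s) *
            PrCond p (fun ω => ZTY ω = v) (fun ω => ZMY ω = s) := by
  intro s hs
  have hPsne : Pr p (fun ω => ZMY ω = s) ≠ 0 := ne_of_gt hs
  have hterm : ∀ v ∈ Finset.univ.filter
      (fun v : V => 0 < Pr p (fun ω => ZTY ω = v ∧ ZMY ω = s)),
      ExCond p (fun ω => Y (T ω) (M (T ω) ω) ω)
          (fun ω => T ω = t ∧ M (T ω) ω = m ∧ ZTY ω = v ∧ ZMY ω = s) *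
        PrCond p (fun ω => ZTY ω = v) (fun ω => ZMY ω = s) =
      Ex p (fun ω => Y t m ω * I[ZTY ω = v ∧ ZMY ω = s]) /
        Pr p (fun ω => ZMY ω = s) := by
    intro v hv
    have hB : 0 < Pr p (fun ω => ZTY ω = v ∧ ZMY ω = s) := (Finset.mem_filter.mp hv).2
    have hC : 0 < Pr p (fun ω => T ω = t ∧ M (T ω) ω = m ∧ ZTY ω = v ∧ ZMY ω = s) :=
      hpos v s hB
    have hBne := ne_of_gt hB
    have hCne := ne_of_gt hC
    have hcons : Ex p (fun ω => Y (T ω) (M (T ω) ω) ω *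
        I[T ω = t ∧ M (T ω) ω = m ∧ ZTY ω = v ∧ ZMY ω = s]) =
        Ex p (fun ω => Y t m ω *
        I[T ω = t ∧ M (T ω) ω = m ∧ ZTY ω = v ∧ ZMY ω = s]) := by
      apply Finset.sum_congr rfl
      intro ω _
      dsimp only
      by_cases h : T ω = t ∧ M (T ω) ω = m ∧ ZTY ω = v ∧ ZMY ω = s
      · obtain ⟨h1, h2, _, _⟩ := h
        rw [h1] at h2 ⊢
        rw [h2]
      · simp [h]
    have hign' := hign v s hB
    unfold ExCond PrCond at hign' ⊢
    dsimp only at hign' ⊢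
    have hre : Ex p (fun ω => (Y t m ω * (if T ω = t ∧ M (T ω) ω = m then 1 else 0)) *
        I[ZTY ω = v ∧ ZMY ω = s]) =
        Ex p (fun ω => Y t m ω *
        I[T ω = t ∧ M (T ω) ω = m ∧ ZTY ω = v ∧ ZMY ω = s]) := by
      apply Finset.sum_congr rfl
      intro ω _
      by_cases h1 : T ω = t ∧ M (T ω) ω = m <;> by_cases h2 : ZTY ω = v ∧ ZMY ω = s <;>
        simp [h1, h2, and_assoc]
    have hPrC : Pr p (fun ω => (T ω = t ∧ M (T ω) ω = m) ∧ ZTY ω = v ∧ ZMY ω = s) =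
        Pr p (fun ω => T ω = t ∧ M (T ω) ω = m ∧ ZTY ω = v ∧ ZMY ω = s) := by
      apply Finset.sum_congr rfl
      intro ω _
      simp [and_assoc]
    rw [hre, hPrC] at hign'
    rw [hcons]
    have key : Ex p (fun ω => Y t m ω *
        I[T ω = t ∧ M (T ω) ω = m ∧ ZTY ω = v ∧ ZMY ω = s]) *
        Pr p (fun ω => ZTY ω = v ∧ ZMY ω = s) =
        Ex p (fun ω => Y t m ω * I[ZTY ω = v ∧ ZMY ω = s]) *
        Pr p (fun ω => T ω = t ∧ M (T ω) ω = m ∧ ZTY ω = v ∧ ZMY ω = s) := by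
      apply mul_right_cancel₀ hBne
      field_simp at hign'
      simp only [mul_ite, mul_one, mul_zero]
      ring_nf
      ring_nf at hign'
      simp only [mul_ite, mul_one, mul_zero] at hign'
      linear_combination (Pr p fun ω => ZTY ω = v ∧ ZMY ω = s) * hign'
    have hfrac : Ex p (fun ω => Y t m ω *
        I[T ω = t ∧ M (T ω) ω = m ∧ ZTY ω = v ∧ ZMY ω = s]) /
        Pr p (fun ω => T ω = t ∧ M (T ω) ω = m ∧ ZTY ω = v ∧ ZMY ω = s) =
        Ex p (fun ω => Y t m ω * I[ZTY ω = v ∧ ZMY ω = s]) /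
        Pr p (fun ω => ZTY ω = v ∧ ZMY ω = s) := by
      rw [div_eq_div_iff hCne hBne]
      linarith [key]
    rw [hfrac]
    field_simp
  rw [Finset.sum_congr rfl hterm]
  rw [← Finset.sum_div]
  unfold ExCond
  congr 1
  have htot : Ex p (fun ω => Y t m ω * I[ZMY ω = s]) =
      ∑ v : V, Ex p (fun ω => Y t m ω * I[ZTY ω = v ∧ ZMY ω = s]) := by
    unfold Ex
    rw [Finset.sum_comm]
    apply Finset.sum_congr rfl
    intro ω _
    by_cases hms : ZMY ω = s
    · simp [hms, Finset.sum_ite_eq, eq_comm]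
    · simp [hms]
  rw [htot]
  symm
  apply Finset.sum_subset (Finset.filter_subset _ _)
  intro v _ hv
  have hz : Pr p (fun ω => ZTY ω = v ∧ ZMY ω = s) = 0 := by
    have hnn := Pr_nonneg' p hp (fun ω => ZTY ω = v ∧ ZMY ω = s)
    have : ¬ 0 < Pr p (fun ω => ZTY ω = v ∧ ZMY ω = s) := by simpa using hv
    linarith
  apply Finset.sum_eq_zero
  intro ω _
  by_cases hA : ZTY ω = v ∧ ZMY ω = s
  · simp [p_zero_of_Pr_zero p hp _ hz ω hA]
  · simp [hA]
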